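/- Let ε̂, γ, c > 0 with γ ≥ 1, c ≥ 1, and let (y_i) be positive reals with y_i ≤ ε̂^i γ^{i-1} c^{i-1} ∏_{j=2}^{i}(4-6/j) for all 1 ≤ i < l. Then ∑_{i=1}^{l-1} y_i y_{l-i} ≤ ε̂^l γ^{l-2} c^{l-2} ∏_{j=2}^{l}(4-6/j). -/

import Mathlib

open Finset

lemma cat_rec (m : ℕ) : (m + 2) * catalan (m + 1) = 2 * (2 * m + 1) * catalan m := by
  have h1 := succ_mul_catalan_eq_centralBinom (m + 1)
  have h2 := succ_mul_catalan_eq_centralBinom m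
  have h3 := Nat.succ_mul_centralBinom_succ m
  have : (m + 1) * ((m + 2) * catalan (m + 1)) = (m + 1) * (2 * (2 * m + 1) * catalan m) := by
    rw [show (m+1) * ((m+2) * catalan (m+1)) = (m+1+1) * catalan (m+1) * (m+1) by ring, h1]
    rw [show (m+1) * (2*(2*m+1) * catalan m) = 2*(2*m+1)*((m+1)*catalan m) by ring, h2]
    rw [mul_comm]; exact h3
  exact Nat.eq_of_mul_eq_mul_left (by omega) this

lemma prod_eq_catalan (i : ℕ) (hi : 1 ≤ i) :
    ∏ j ∈ Finset.Icc 2 i, (4 - 6 / (j : ℝ)) = (catalan (i - 1) : ℝ) := by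
  induction i with
  | zero => omega
  | succ n ih =>
    rcases Nat.lt_or_ge n 1 with hn | hn
    · interval_cases n
      simp
    · rw [Finset.prod_Icc_succ_top (by omega), ih hn]
      obtain ⟨m, rfl⟩ := Nat.exists_eq_add_of_le hn
      have hr := cat_rec m
      have hr' : ((m:ℝ) + 2) * catalan (m + 1) = 2 * (2 * m + 1) * catalan m := by
        exact_mod_cast hr
      have hm2 : ((m:ℝ) + 2) ≠ 0 := by positivity
      simp only [show 1 + m - 1 = m by omega, show 1 + m + 1 - 1 = m + 1 by omega]
      push_cast
      field_simp
      nlinarith [hr']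

lemma cat_sum (n : ℕ) :
    ∑ i ∈ Finset.Icc 1 (n + 1), catalan (i - 1) * catalan (n + 2 - i - 1) = catalan (n + 1) := by
  rw [catalan_succ, Fin.sum_univ_eq_sum_range (fun k => catalan k * catalan (n - k)) (n + 1)]
  apply Finset.sum_nbij' (fun i => i - 1) (fun i => i + 1)
  all_goals intro a ha
  all_goals simp only [Finset.mem_Icc, Finset.mem_range] at ha ⊢
  all_goals try omega
  all_goals congr 1 <;> congr 1 <;> omega

/-- Recursive estimate via the Catalan recurrence. If positive reals
`y i` satisfy `y i ≤ ε̂^i γ^{i-1} c^{i-1} ∏_{j=2}^{i}(4-6/j)` for `1 ≤ i < l`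
(where `γ, c ≥ 1`, `ε̂ > 0`), then
`∑_{i=1}^{l-1} y i y (l-i) ≤ ε̂^l γ^{l-2} c^{l-2} ∏_{j=2}^{l}(4-6/j)`. -/
theorem recursive_catalan_estimate
    (ε γ c : ℝ) (hε : 0 < ε) (hγ0 : 0 < γ) (hc0 : 0 < c)
    (hγ : 1 ≤ γ) (hc : 1 ≤ c)
    (l : ℕ) (hl : 2 ≤ l) (y : ℕ → ℝ) (hy : ∀ i, 0 < y i)
    (hb : ∀ i, 1 ≤ i → i < l →
      y i ≤ ε ^ i * γ ^ (i - 1) * c ^ (i - 1) * ∏ j ∈ Finset.Icc 2 i, (4 - 6 / (j : ℝ))) :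
    ∑ i ∈ Finset.Icc 1 (l - 1), y i * y (l - i) ≤
      ε ^ l * γ ^ (l - 2) * c ^ (l - 2) * ∏ j ∈ Finset.Icc 2 l, (4 - 6 / (j : ℝ)) := by
  have key : ∀ i ∈ Finset.Icc 1 (l - 1), y i * y (l - i) ≤
      (ε ^ l * γ ^ (l - 2) * c ^ (l - 2)) *
        ((catalan (i - 1) : ℝ) * (catalan (l - i - 1) : ℝ)) := by
    intro i hi
    simp only [Finset.mem_Icc] at hi
    obtain ⟨h1, h2⟩ := hi
    have hli : 1 ≤ l - i := by omega
    have b1 := hb i h1 (by omega)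
    have b2 := hb (l - i) hli (by omega)
    rw [prod_eq_catalan i h1] at b1
    rw [prod_eq_catalan (l - i) hli] at b2
    have hcast : (0:ℝ) ≤ ε ^ (l-i) * γ ^ (l-i-1) * c ^ (l-i-1) * (catalan (l-i-1) : ℝ) := by
      positivity
    have hmul := mul_le_mul b1 b2 (hy (l - i)).le (le_trans (hy i).le b1)
    refine hmul.trans_eq ?_
    have e1 : i + (l - i) = l := by omega
    have e2 : (i - 1) + (l - i - 1) = l - 2 := by omega
    rw [show ε ^ l = ε ^ i * ε ^ (l - i) by rw [← pow_add, e1],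
        show γ ^ (l - 2) = γ ^ (i - 1) * γ ^ (l - i - 1) by rw [← pow_add, e2],
        show c ^ (l - 2) = c ^ (i - 1) * c ^ (l - i - 1) by rw [← pow_add, e2]]
    ring
  calc ∑ i ∈ Finset.Icc 1 (l - 1), y i * y (l - i)
      ≤ ∑ i ∈ Finset.Icc 1 (l - 1), (ε ^ l * γ ^ (l - 2) * c ^ (l - 2)) *
          ((catalan (i - 1) : ℝ) * (catalan (l - i - 1) : ℝ)) := Finset.sum_le_sum key
    _ = (ε ^ l * γ ^ (l - 2) * c ^ (l - 2)) *
          ∑ i ∈ Finset.Icc 1 (l - 1), ((catalan (i - 1) : ℝ) * (catalan (l - i - 1) : ℝ)) := by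
        rw [Finset.mul_sum]
    _ = ε ^ l * γ ^ (l - 2) * c ^ (l - 2) * ∏ j ∈ Finset.Icc 2 l, (4 - 6 / (j : ℝ)) := by
        rw [prod_eq_catalan l (by omega)]
        congr 1
        obtain ⟨n, rfl⟩ : ∃ n, l = n + 2 := ⟨l - 2, by omega⟩
        have := cat_sum n
        push_cast [← this]
        norm_num
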